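/- Let r ≥ 2, t ≥ 1, and let n, k be integers with k ≥ t and (r−1)·n > r·k − t. Then m(n,k,r,t) ≤ m(n−1,k,r,t) + m(n−1,k−1,r,t), where m(n,k,r,t) denotes the maximum size of an r-wise t-intersecting family of k-element subsets of [n]. -/

import Mathlib

/-- A family `𝓕` is `r`-wise `t`-intersecting if any `r` (not necessarily distinct)
members have at least `t` common elements. -/
def RwiseIntersecting (r t : ℕ) (𝓕 : Finset (Finset ℕ)) : Prop :=
  ∀ G : Fin r → Finset ℕ, (∀ i, G i ∈ 𝓕) → t ≤ (⋂ i, ((G i : Finset ℕ) : Set ℕ)).ncard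

/-- `maxIntersecting n k r t` is the maximum size `m(n,k,r,t)` of an `r`-wise
`t`-intersecting family of `k`-element subsets of `[n]`. -/
noncomputable def maxIntersecting (n k r t : ℕ) : ℕ := by
  classical
  exact ((Finset.powersetCard k (Finset.Icc 1 n)).powerset).sup
    (fun 𝓕 => if RwiseIntersecting r t 𝓕 then 𝓕.card else 0)

open Finset

lemma mem_inf_univ {r : ℕ} (h : (Finset.univ (α := Fin r)).Nonempty) (G : Fin r → Finset ℕ)
    (x : ℕ) : x ∈ Finset.univ.inf' h G ↔ ∀ m, x ∈ G m := by
  constructor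
  · intro hx m
    exact Finset.le_iff_subset.1 (Finset.inf'_le _ (mem_univ m)) hx
  · intro hx
    exact Finset.singleton_subset_iff.1 <| Finset.le_iff_subset.1 <|
      Finset.le_inf' h _ fun m _ => Finset.le_iff_subset.2 <|
        Finset.singleton_subset_iff.2 (hx m)

lemma ncard_iInter_eq {r : ℕ} (h : (Finset.univ (α := Fin r)).Nonempty) (G : Fin r → Finset ℕ) :
    (⋂ m, ((G m : Finset ℕ) : Set ℕ)).ncard = (Finset.univ.inf' h G).card := by
  rw [show (⋂ m, ((G m : Finset ℕ) : Set ℕ)) = ↑(Finset.univ.inf' h G) from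
    Set.ext fun x => by simp [mem_inf_univ h G x]]
  exact Set.ncard_coe_finset _

lemma compress_singleton {i j : ℕ} {A : Finset ℕ} (hiA : i ∉ A) (hjA : j ∈ A) :
    UV.compress {i} {j} A = insert i (A.erase j) := by
  have hij : i ≠ j := fun e => hiA (e ▸ hjA)
  rw [UV.compress, if_pos ⟨Finset.disjoint_singleton_left.2 hiA,
    Finset.singleton_subset_iff.2 hjA⟩]
  ext x
  simp only [sup_eq_union, mem_sdiff, mem_union, mem_singleton, mem_insert, mem_erase]
  constructor
  · rintro ⟨hx1 | hx2, hx3⟩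
    · exact Or.inr ⟨hx3, hx1⟩
    · exact Or.inl hx2
  · rintro (rfl | ⟨hx1, hx2⟩)
    · exact ⟨Or.inr rfl, hij⟩
    · exact ⟨Or.inl hx2, hx1⟩

lemma rwise_compression {r t i j : ℕ} (hij : i ≠ j) {𝓕 : Finset (Finset ℕ)}
    (h : RwiseIntersecting r t 𝓕) : RwiseIntersecting r t (UV.compression {i} {j} 𝓕) := by
  classical
  intro A hA
  by_cases hP : ∀ m, A m ∈ 𝓕
  · exact h A hP
  obtain ⟨mc, hmc⟩ := not_forall.1 hP
  have hu : (Finset.univ (α := Fin r)).Nonempty := ⟨mc, mem_univ mc⟩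
  -- choose original sets B
  have hBex : ∀ m, ∃ B : Finset ℕ, B ∈ 𝓕 ∧ (A m ∈ 𝓕 → B = A m) ∧
      (A m ∉ 𝓕 → i ∉ B ∧ j ∈ B ∧ A m = insert i (B.erase j)) := by
    intro m
    rcases UV.mem_compression.1 (hA m) with ⟨h1, _⟩ | ⟨h1, b, hb, hcb⟩
    · exact ⟨A m, h1, fun _ => rfl, fun h' => absurd h1 h'⟩
    · refine ⟨b, hb, fun h' => absurd h' h1, fun _ => ?_⟩
      have hcond : i ∉ b ∧ j ∈ b := by
        by_contra hc
        have : UV.compress {i} {j} b = b := by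
          rw [UV.compress, if_neg]
          intro ⟨hd, hs⟩
          exact hc ⟨Finset.disjoint_singleton_left.1 hd, Finset.singleton_subset_iff.1 hs⟩
        rw [this] at hcb
        exact h1 (hcb ▸ hb)
      refine ⟨hcond.1, hcond.2, ?_⟩
      rw [← hcb, compress_singleton hcond.1 hcond.2]
  choose B hB1 hB2 hB3 using hBex
  -- facts about non-members
  have hAa : i ∈ A mc ∧ j ∉ A mc := by
    obtain ⟨_, h2, h3⟩ := hB3 mc hmc
    constructor
    · rw [h3]; exact mem_insert_self _ _
    · rw [h3]; simp [hij.symm]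
  have htrans : ∀ m y, y ≠ i → y ≠ j → (y ∈ B m ↔ y ∈ A m) := by
    intro m y hyi hyj
    by_cases hPm : A m ∈ 𝓕
    · rw [hB2 m hPm]
    · obtain ⟨_, _, h3⟩ := hB3 m hPm
      rw [h3]
      simp only [mem_insert, mem_erase]
      constructor
      · intro hy; exact Or.inr ⟨hyj, hy⟩
      · rintro (rfl | ⟨_, hy⟩)
        · exact absurd rfl hyi
        · exact hy
  rw [ncard_iInter_eq hu]
  set X := Finset.univ.inf' hu A with hX
  by_cases hiX : ∀ m, i ∈ A m
  · -- i is in the intersection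
    have hY := h B hB1
    rw [ncard_iInter_eq hu] at hY
    set Y := Finset.univ.inf' hu B with hYdef
    have hiY : i ∉ Y := fun hi' => (hB3 mc hmc).1 ((mem_inf_univ hu B i).1 hi' mc)
    have hsub : insert i (Y.erase j) ⊆ X := by
      intro y hy
      rw [mem_inf_univ hu A]
      rcases mem_insert.1 hy with rfl | hy'
      · exact hiX
      · obtain ⟨hyj, hyY⟩ := mem_erase.1 hy'
        have hyi : y ≠ i := fun e => hiY (e ▸ hyY)
        intro m
        exact (htrans m y hyi hyj).1 ((mem_inf_univ hu B y).1 hyY m)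
    have h1 : Y.card ≤ (Y.erase j).card + 1 := by
      calc Y.card ≤ (insert j (Y.erase j)).card := card_le_card (fun x hx => by
            rcases eq_or_ne x j with rfl | hxj
            · exact mem_insert_self _ _
            · exact mem_insert_of_mem (mem_erase.2 ⟨hxj, hx⟩))
        _ ≤ (Y.erase j).card + 1 := card_insert_le _ _
    have h2 : (insert i (Y.erase j)).card = (Y.erase j).card + 1 :=
      card_insert_of_notMem fun hi' => hiY (mem_of_mem_erase hi')
    have := card_le_card hsub
    omega
  · push_neg at hiX
    obtain ⟨m1, hm1⟩ := hiX
    have hPm1 : A m1 ∈ 𝓕 := by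
      by_contra hc
      exact hm1 (by rw [(hB3 m1 hc).2.2]; exact mem_insert_self _ _)
    by_cases hj1 : j ∈ A m1
    · -- use the compression of A m1
      have hD : UV.compress {i} {j} (A m1) ∈ 𝓕 := by
        rcases UV.mem_compression.1 (hA m1) with ⟨_, h2⟩ | ⟨h1, _⟩
        · exact h2
        · exact absurd hPm1 h1
      rw [compress_singleton hm1 hj1] at hD
      set C := Function.update B m1 (insert i ((A m1).erase j)) with hC
      have hCmem : ∀ m, C m ∈ 𝓕 := by
        intro m
        rcases eq_or_ne m m1 with rfl | hm
        · rw [hC, Function.update_self]; exact hD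
        · rw [hC, Function.update_of_ne hm]; exact hB1 m
      have hZ := h C hCmem
      rw [ncard_iInter_eq hu] at hZ
      refine hZ.trans (card_le_card ?_)
      intro y hy
      rw [mem_inf_univ hu C] at hy
      rw [mem_inf_univ hu A]
      have hym1 : y ∈ insert i ((A m1).erase j) := by
        have := hy m1; rwa [hC, Function.update_self] at this
      have hmc1 : mc ≠ m1 := fun e => hmc (e ▸ hPm1)
      have hymc : y ∈ B mc := by
        have := hy mc; rwa [hC, Function.update_of_ne hmc1] at this
      have hyi : y ≠ i := fun e => (hB3 mc hmc).1 (e ▸ hymc)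
      have hyj : y ≠ j := by
        rcases mem_insert.1 hym1 with rfl | hy'
        · exact absurd rfl hyi
        · exact (mem_erase.1 hy').1
      intro m
      rcases eq_or_ne m m1 with rfl | hm
      · rcases mem_insert.1 hym1 with rfl | hy'
        · exact absurd rfl hyi
        · exact mem_of_mem_erase hy'
      · refine (htrans m y hyi hyj).1 ?_
        have := hy m; rwa [hC, Function.update_of_ne hm] at this
    · -- B-intersection is contained in A-intersection
      have hY := h B hB1
      rw [ncard_iInter_eq hu] at hY
      refine hY.trans (card_le_card ?_)
      intro y hy
      rw [mem_inf_univ hu B] at hy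
      rw [mem_inf_univ hu A]
      have hym1 : y ∈ A m1 := by rw [← hB2 m1 hPm1]; exact hy m1
      have hyi : y ≠ i := fun e => hm1 (e ▸ hym1)
      have hyj : y ≠ j := fun e => hj1 (e ▸ hym1)
      intro m
      exact (htrans m y hyi hyj).1 (hy m)

def Shifted (𝓖 : Finset (Finset ℕ)) : Prop :=
  ∀ A ∈ 𝓖, ∀ i j : ℕ, 1 ≤ i → i < j → j ∈ A → i ∉ A → insert i (A.erase j) ∈ 𝓖

def famMeasure (𝓕 : Finset (Finset ℕ)) : ℕ := ∑ A ∈ 𝓕, ∑ x ∈ A, x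

lemma compress_cases {i j : ℕ} (A : Finset ℕ) :
    UV.compress {i} {j} A = A ∨ (i ∉ A ∧ j ∈ A ∧ UV.compress {i} {j} A = insert i (A.erase j)) := by
  by_cases hc : i ∉ A ∧ j ∈ A
  · exact Or.inr ⟨hc.1, hc.2, compress_singleton hc.1 hc.2⟩
  · refine Or.inl ?_
    rw [UV.compress, if_neg]
    intro ⟨hd, hs⟩
    exact hc ⟨Finset.disjoint_singleton_left.1 hd, Finset.singleton_subset_iff.1 hs⟩

lemma famMeasure_lt {i j : ℕ} (hij : i < j) {𝓕 : Finset (Finset ℕ)}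
    (hne : UV.compression {i} {j} 𝓕 ≠ 𝓕) :
    famMeasure (UV.compression {i} {j} 𝓕) < famMeasure 𝓕 := by
  classical
  rw [UV.compression] at hne ⊢
  have q : ∀ Q ∈ {A ∈ 𝓕 | UV.compress {i} {j} A ∉ 𝓕}, UV.compress {i} {j} Q ≠ Q := by
    simp_rw [mem_filter]
    intro Q hQ h
    rw [h] at hQ
    exact hQ.2 hQ.1
  have uA : {A ∈ 𝓕 | UV.compress {i} {j} A ∈ 𝓕} ∪ {A ∈ 𝓕 | UV.compress {i} {j} A ∉ 𝓕} = 𝓕 :=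
    filter_union_filter_not_eq _ _
  have ne₂ : {A ∈ 𝓕 | UV.compress {i} {j} A ∉ 𝓕}.Nonempty := by
    refine nonempty_iff_ne_empty.2 fun z => hne ?_
    rw [filter_image, z, image_empty, union_empty]
    rwa [z, union_empty] at uA
  rw [famMeasure, famMeasure, sum_union UV.compress_disjoint]
  conv_rhs => rw [← uA]
  rw [sum_union (disjoint_filter_filter_not _ _ _), add_lt_add_iff_left, filter_image,
    sum_image UV.compress_injOn]
  refine sum_lt_sum_of_nonempty ne₂ fun A hA => ?_
  rcases compress_cases (i := i) (j := j) A with he | ⟨h1, h2, h3⟩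
  · exact absurd he (q A hA)
  rw [h3, sum_insert (fun hc => h1 (mem_of_mem_erase hc))]
  have := Finset.add_sum_erase A (fun x => x) h2
  omega

lemma exists_shifted (n k r t : ℕ) (𝓕 : Finset (Finset ℕ))
    (hsub : 𝓕 ⊆ powersetCard k (Icc 1 n)) (hint : RwiseIntersecting r t 𝓕) :
    ∃ 𝓖, 𝓖 ⊆ powersetCard k (Icc 1 n) ∧ RwiseIntersecting r t 𝓖 ∧ 𝓖.card = 𝓕.card ∧
      Shifted 𝓖 := by
  classical
  by_cases hall : ∀ i j : ℕ, 1 ≤ i → i < j → j ≤ n → UV.compression {i} {j} 𝓕 = 𝓕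
  · refine ⟨𝓕, hsub, hint, rfl, ?_⟩
    intro A hA i j h1 h2 hjA hiA
    have hjn : j ≤ n := by
      have := (mem_powersetCard.1 (hsub hA)).1 hjA
      exact (mem_Icc.1 this).2
    have := UV.compress_mem_compression (u := {i}) (v := {j}) hA
    rw [hall i j h1 h2 hjn, compress_singleton hiA hjA] at this
    exact this
  · push_neg at hall
    obtain ⟨i, j, h1, h2, h3, hne⟩ := hall
    have hmeas : famMeasure (UV.compression {i} {j} 𝓕) < famMeasure 𝓕 := famMeasure_lt h2 hne
    have hsub' : UV.compression {i} {j} 𝓕 ⊆ powersetCard k (Icc 1 n) := by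
      intro A hA
      rcases UV.mem_compression.1 hA with ⟨hA1, _⟩ | ⟨_, b, hb, hcb⟩
      · exact hsub hA1
      · rcases compress_cases (i := i) (j := j) b with he | ⟨hb1, hb2, hb3⟩
        · rw [he] at hcb; exact hsub (hcb ▸ hb)
        · rw [hb3] at hcb
          subst hcb
          obtain ⟨hbsub, hbcard⟩ := mem_powersetCard.1 (hsub hb)
          rw [mem_powersetCard]
          constructor
          · intro x hx
            rcases mem_insert.1 hx with rfl | hx'
            · exact mem_Icc.2 ⟨h1, le_trans (le_of_lt h2) h3⟩
            · exact hbsub (mem_of_mem_erase hx')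
          · rw [card_insert_of_notMem (fun hc => hb1 (mem_of_mem_erase hc)),
              card_erase_of_mem hb2]
            have : 1 ≤ b.card := card_pos.2 ⟨j, hb2⟩
            omega
    have hint' := rwise_compression (Nat.ne_of_lt h2) hint
    obtain ⟨𝓖, a, b, c, d⟩ := exists_shifted n k r t (UV.compression {i} {j} 𝓕) hsub' hint'
    exact ⟨𝓖, a, b, c.trans (UV.card_compression _ _ _), d⟩
termination_by famMeasure 𝓕

lemma erased_intersecting (n k r t : ℕ) (hr : 2 ≤ r) (ht : 1 ≤ t) (hk : t ≤ k)
    (hn : r * k - t < (r - 1) * n) (𝓖 : Finset (Finset ℕ))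
    (h𝓖 : 𝓖 ⊆ powersetCard k (Icc 1 n)) (hint : RwiseIntersecting r t 𝓖) (hsh : Shifted 𝓖) :
    RwiseIntersecting r t (({A ∈ 𝓖 | n ∈ A}).image (fun A => A.erase n)) := by
  classical
  intro G hG
  have hr0 : 0 < r := by omega
  have hu : (Finset.univ (α := Fin r)).Nonempty := ⟨⟨0, hr0⟩, mem_univ _⟩
  -- recover the original sets
  have hFex : ∀ m, ∃ F : Finset ℕ, F ∈ 𝓖 ∧ n ∈ F ∧ G m = F.erase n := by
    intro m
    obtain ⟨F, hF, hFe⟩ := mem_image.1 (hG m)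
    obtain ⟨hF1, hF2⟩ := mem_filter.1 hF
    exact ⟨F, hF1, hF2, hFe.symm⟩
  choose F hF1 hF2 hF3 using hFex
  have hFsub : ∀ m, F m ⊆ Icc 1 n := fun m => (mem_powersetCard.1 (h𝓖 (hF1 m))).1
  have hFcard : ∀ m, (F m).card = k := fun m => (mem_powersetCard.1 (h𝓖 (hF1 m))).2
  have hn1 : 1 ≤ n := (mem_Icc.1 (hFsub ⟨0, hr0⟩ (hF2 ⟨0, hr0⟩))).1
  rw [ncard_iInter_eq hu]
  set T := Finset.univ.inf' hu F with hTdef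
  have hT : t ≤ T.card := by
    have := hint F hF1
    rwa [ncard_iInter_eq hu] at this
  have hnT : n ∈ T := (mem_inf_univ hu F n).2 hF2
  have hGinf : Finset.univ.inf' hu G = T.erase n := by
    ext x
    rw [mem_inf_univ hu G, mem_erase]
    constructor
    · intro hx
      have h0 := hx ⟨0, hr0⟩
      rw [hF3] at h0
      refine ⟨(mem_erase.1 h0).1, (mem_inf_univ hu F x).2 fun m => ?_⟩
      have := hx m
      rw [hF3] at this
      exact mem_of_mem_erase this
    · rintro ⟨hxn, hxT⟩ m
      rw [hF3]
      exact mem_erase.2 ⟨hxn, (mem_inf_univ hu F x).1 hxT m⟩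
  rw [hGinf]
  by_contra hlt
  push_neg at hlt
  have hTcard : T.card = t := by
    have := card_erase_of_mem hnT
    omega
  have hTsub : T ⊆ Icc 1 n := fun x hx => hFsub ⟨0, hr0⟩ ((mem_inf_univ hu F x).1 hx ⟨0, hr0⟩)
  have htn : t ≤ n := by
    have := card_le_card hTsub
    rwa [Nat.card_Icc, Nat.add_sub_cancel, hTcard] at this
  -- find an element missing from at least two of the sets
  have hcount : ∃ x ∈ Icc 1 (n - 1), 2 ≤ ({m : Fin r | x ∉ F m} : Finset (Fin r)).card := by
    by_contra hc
    push_neg at hc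
    have hbound : ∀ y ∈ Icc 1 n \ T, r - 1 ≤ ({m : Fin r | y ∈ F m} : Finset (Fin r)).card := by
      intro y hy
      obtain ⟨hy1, hy2⟩ := mem_sdiff.1 hy
      have hyn : y ≠ n := fun e => hy2 (e ▸ hnT)
      have hy3 : y ∈ Icc 1 (n - 1) := by
        rw [mem_Icc] at hy1 ⊢
        omega
      have := hc y hy3
      have hsplit := Finset.card_filter_add_card_filter_not
        (s := (Finset.univ : Finset (Fin r))) (p := fun m => y ∈ F m)
      rw [Finset.card_univ, Fintype.card_fin] at hsplit
      omega
    have hsum1 : ∑ m : Fin r, (F m).card = ∑ y ∈ Icc 1 n, ({m : Fin r | y ∈ F m} : Finset (Fin r)).card := by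
      calc ∑ m : Fin r, (F m).card
          = ∑ m : Fin r, ∑ y ∈ Icc 1 n, (if y ∈ F m then 1 else 0) := by
            refine Finset.sum_congr rfl fun m _ => ?_
            rw [← Finset.card_filter]
            congr 1
            rw [Finset.filter_mem_eq_inter, Finset.inter_eq_right.2 (hFsub m)]
        _ = ∑ y ∈ Icc 1 n, ∑ m : Fin r, (if y ∈ F m then 1 else 0) := Finset.sum_comm
        _ = ∑ y ∈ Icc 1 n, ({m : Fin r | y ∈ F m} : Finset (Fin r)).card := by
            refine Finset.sum_congr rfl fun y _ => ?_
            rw [Finset.card_filter]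
    have hsum2 : ∑ m : Fin r, (F m).card = r * k := by
      rw [Finset.sum_congr rfl fun m _ => hFcard m, Finset.sum_const, Finset.card_univ,
        Fintype.card_fin, smul_eq_mul]
    have hsumT : ∑ y ∈ T, ({m : Fin r | y ∈ F m} : Finset (Fin r)).card = t * r := by
      rw [Finset.sum_congr rfl fun y hy => ?_, Finset.sum_const, hTcard, smul_eq_mul]
      rw [Finset.filter_true_of_mem fun m _ => (mem_inf_univ hu F y).1 hy m, Finset.card_univ,
        Fintype.card_fin]
    have hsumD : (n - t) * (r - 1) ≤ ∑ y ∈ Icc 1 n \ T, ({m : Fin r | y ∈ F m} : Finset (Fin r)).card := by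
      have := Finset.card_nsmul_le_sum (Icc 1 n \ T) _ (r - 1) hbound
      rwa [card_sdiff_of_subset hTsub, Nat.card_Icc, Nat.add_sub_cancel, hTcard, smul_eq_mul] at this
    have hsplitsum := Finset.sum_sdiff (f := fun y => ({m : Fin r | y ∈ F m} : Finset (Fin r)).card) hTsub
    -- now derive contradiction
    obtain ⟨a, rfl⟩ : ∃ a, r = a + 1 := ⟨r - 1, by omega⟩
    obtain ⟨s, hs⟩ : ∃ s, n = t + s := ⟨n - t, by omega⟩
    have hSI : ∑ y ∈ Icc 1 n, ({m : Fin (a+1) | y ∈ F m} : Finset (Fin (a+1))).card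
        = (a + 1) * k := by rw [← hsum1, hsum2]
    have hsumD' : s * a ≤ ∑ y ∈ Icc 1 n \ T, ({m : Fin (a+1) | y ∈ F m} : Finset (Fin (a+1))).card := by
      have h' := hsumD
      have h1 : n - t = s := by omega
      have h2 : a + 1 - 1 = a := by omega
      rwa [h1, h2] at h'
    have key : s * a + t * (a + 1) ≤ (a + 1) * k := by linarith [hsplitsum, hsumT, hSI, hsumD']
    have e1 : a * (t + s) + t ≤ (a + 1) * k := by nlinarith [key]
    have e3 : a * (t + s) ≤ (a + 1) * k - t := Nat.le_sub_of_add_le e1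
    have e2 : (a + 1) * k - t < a * (t + s) := by
      have hh : (a + 1 - 1) * n = a * (t + s) := by
        rw [hs, Nat.add_sub_cancel]
      rw [← hh]
      exact hn
    exact absurd e3 (not_le.2 e2)
  obtain ⟨x, hxI, hx2⟩ := hcount
  obtain ⟨m1, hm1, m2, hm2, hm12⟩ := Finset.one_lt_card.1 hx2
  rw [mem_filter] at hm1 hm2
  have hxm1 : x ∉ F m1 := hm1.2
  have hxm2 : x ∉ F m2 := hm2.2
  have hx1n : 1 ≤ x ∧ x ≤ n - 1 := mem_Icc.1 hxI
  have hxltn : x < n := by omega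
  have hF' : insert x ((F m1).erase n) ∈ 𝓖 :=
    hsh (F m1) (hF1 m1) x n hx1n.1 hxltn (hF2 m1) hxm1
  set C := Function.update F m1 (insert x ((F m1).erase n)) with hC
  have hCmem : ∀ m, C m ∈ 𝓖 := by
    intro m
    rcases eq_or_ne m m1 with rfl | hm
    · rw [hC, Function.update_self]; exact hF'
    · rw [hC, Function.update_of_ne hm]; exact hF1 m
  have hZ := hint C hCmem
  rw [ncard_iInter_eq hu] at hZ
  have hsubC : Finset.univ.inf' hu C ⊆ T.erase n := by
    intro y hy
    rw [mem_inf_univ hu C] at hy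
    have hym1 : y ∈ insert x ((F m1).erase n) := by
      have := hy m1; rwa [hC, Function.update_self] at this
    have hym2 : y ∈ F m2 := by
      have := hy m2; rwa [hC, Function.update_of_ne hm12.symm] at this
    have hyx : y ≠ x := fun e => hxm2 (e ▸ hym2)
    have hyn : y ≠ n ∧ y ∈ F m1 := by
      rcases mem_insert.1 hym1 with rfl | hy'
      · exact absurd rfl hyx
      · exact ⟨(mem_erase.1 hy').1, mem_of_mem_erase hy'⟩
    refine mem_erase.2 ⟨hyn.1, (mem_inf_univ hu F y).2 fun m => ?_⟩
    rcases eq_or_ne m m1 with rfl | hm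
    · exact hyn.2
    · have := hy m; rwa [hC, Function.update_of_ne hm] at this
  have := card_le_card hsubC
  omega

lemma maxIntersecting_le {n k r t c : ℕ}
    (h : ∀ 𝓕 ⊆ powersetCard k (Icc 1 n), RwiseIntersecting r t 𝓕 → 𝓕.card ≤ c) :
    maxIntersecting n k r t ≤ c := by
  unfold maxIntersecting
  refine Finset.sup_le fun 𝓕 h𝓕 => ?_
  split_ifs with h'
  · exact h 𝓕 (Finset.mem_powerset.1 h𝓕) h'
  · exact Nat.zero_le _

lemma le_maxIntersecting {n k r t : ℕ} {𝓕 : Finset (Finset ℕ)}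
    (hs : 𝓕 ⊆ powersetCard k (Icc 1 n)) (hi : RwiseIntersecting r t 𝓕) :
    𝓕.card ≤ maxIntersecting n k r t := by
  unfold maxIntersecting
  refine le_trans ?_ (Finset.le_sup (Finset.mem_powerset.2 hs))
  rw [if_pos hi]


theorem maxIntersecting_le_add
    (n k r t : ℕ) (hr : 2 ≤ r) (ht : 1 ≤ t) (hk : t ≤ k)
    (hn : r * k - t < (r - 1) * n) :
    maxIntersecting n k r t ≤
      maxIntersecting (n - 1) k r t + maxIntersecting (n - 1) (k - 1) r t := by
  classical
  refine maxIntersecting_le fun 𝓕 hsub hint => ?_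
  obtain ⟨𝓖, hGsub, hGint, hGcard, hGsh⟩ := exists_shifted n k r t 𝓕 hsub hint
  rw [← hGcard]
  have hsplit := Finset.card_filter_add_card_filter_not
    (s := 𝓖) (p := fun A => n ∈ A)
  have bound1 : ({A ∈ 𝓖 | ¬ n ∈ A}).card ≤ maxIntersecting (n - 1) k r t := by
    refine le_maxIntersecting (fun A hA => ?_) (fun G hG => hGint G fun m => (mem_filter.1 (hG m)).1)
    obtain ⟨hA1, hA2⟩ := mem_filter.1 hA
    obtain ⟨hA3, hA4⟩ := mem_powersetCard.1 (hGsub hA1)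
    refine mem_powersetCard.2 ⟨fun x hx => ?_, hA4⟩
    have hx1 := mem_Icc.1 (hA3 hx)
    have hxn : x ≠ n := fun e => hA2 (e ▸ hx)
    rw [mem_Icc]
    omega
  have bound2 : (({A ∈ 𝓖 | n ∈ A}).image (fun A => A.erase n)).card ≤
      maxIntersecting (n - 1) (k - 1) r t := by
    refine le_maxIntersecting (fun B hB => ?_)
      (erased_intersecting n k r t hr ht hk hn 𝓖 hGsub hGint hGsh)
    obtain ⟨A, hA, rfl⟩ := mem_image.1 hB
    obtain ⟨hA1, hA2⟩ := mem_filter.1 hA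
    obtain ⟨hA3, hA4⟩ := mem_powersetCard.1 (hGsub hA1)
    refine mem_powersetCard.2 ⟨fun x hx => ?_, by rw [card_erase_of_mem hA2, hA4]⟩
    obtain ⟨hxn, hxA⟩ := mem_erase.1 hx
    have hx1 := mem_Icc.1 (hA3 hxA)
    rw [mem_Icc]
    omega
  have himg : (({A ∈ 𝓖 | n ∈ A}).image (fun A => A.erase n)).card =
      ({A ∈ 𝓖 | n ∈ A}).card := by
    refine card_image_of_injOn fun A hA B hB hAB => ?_
    have hA2 := (mem_filter.1 hA).2
    have hB2 := (mem_filter.1 hB).2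
    rw [← insert_erase hA2, ← insert_erase hB2]
    rw [hAB]
  omega
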